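/- Let C ∈ B(H) be accretive, and suppose the semigroup satisfies ‖e^{-C t₀}‖ < 1 for some t₀ > 0. Then C has a finite hypocoercivity index: there exist m ∈ ℕ and κ > 0 such that ∑_{j=0}^{m} (C*)^j C_H C^j ≥ κ I. -/

import Mathlib

open ContinuousLinearMap
open scoped InnerProductSpace

set_option synthInstance.maxHeartbeats 1000000
set_option maxHeartbeats 4000000
set_option maxRecDepth 8000

section Aux

variable {H : Type*} [NormedAddCommGroup H] [InnerProductSpace ℂ H] [CompleteSpace H]

/-- The real symmetric form associated to `C`. -/
private noncomputable def Bf (C : H →L[ℂ] H) (u v : H) : ℝ :=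
  ((⟪C u, v⟫_ℂ).re + (⟪C v, u⟫_ℂ).re) / 2

private lemma Bf_self (C : H →L[ℂ] H) (u : H) : Bf C u u = (⟪C u, u⟫_ℂ).re := by
  simp [Bf]

private lemma Bf_comm (C : H →L[ℂ] H) (u v : H) : Bf C u v = Bf C v u := by
  simp [Bf, add_comm]

private lemma Bf_add_left (C : H →L[ℂ] H) (u v w : H) :
    Bf C (u + v) w = Bf C u w + Bf C v w := by
  simp only [Bf, map_add, inner_add_left, inner_add_right, Complex.add_re]
  ring

private lemma Bf_smul_left (C : H →L[ℂ] H) (r : ℝ) (u v : H) :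
    Bf C (r • u) v = r * Bf C u v := by
  have h1 : (⟪C (r • u), v⟫_ℂ).re = r * (⟪C u, v⟫_ℂ).re := by
    rw [ContinuousLinearMap.map_smul_of_tower, ← Complex.coe_smul, inner_smul_left]
    simp [Complex.mul_re]
  have h2 : (⟪C v, r • u⟫_ℂ).re = r * (⟪C v, u⟫_ℂ).re := by
    rw [← Complex.coe_smul, inner_smul_right]
    simp [Complex.mul_re]
  simp only [Bf, h1, h2]
  ring

private lemma Bf_smul_right (C : H →L[ℂ] H) (r : ℝ) (u v : H) :
    Bf C u (r • v) = r * Bf C u v := by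
  rw [Bf_comm, Bf_smul_left, Bf_comm]

private lemma Bf_add_right (C : H →L[ℂ] H) (u v w : H) :
    Bf C w (u + v) = Bf C w u + Bf C w v := by
  rw [Bf_comm, Bf_add_left, Bf_comm C u w, Bf_comm C v w]

private lemma Bf_zero_left (C : H →L[ℂ] H) (v : H) : Bf C 0 v = 0 := by
  simpa using Bf_smul_left C 0 0 v

private lemma Bf_sum_left (C : H →L[ℂ] H) (F : Finset ℕ) (g : ℕ → H) (w : H) :
    Bf C (∑ j ∈ F, g j) w = ∑ j ∈ F, Bf C (g j) w := by
  classical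
  induction F using Finset.induction_on with
  | empty => simp [Bf_zero_left]
  | insert a s' hj ih =>
                    simp [Finset.sum_insert hj, Bf_add_left, ih]

private lemma Bf_sum_right (C : H →L[ℂ] H) (F : Finset ℕ) (g : ℕ → H) (w : H) :
    Bf C w (∑ j ∈ F, g j) = ∑ j ∈ F, Bf C w (g j) := by
  rw [Bf_comm, Bf_sum_left]
  exact Finset.sum_congr rfl fun j _ => Bf_comm C (g j) w

private lemma Bf_expand (C : H →L[ℂ] H) (u v : H) :
    Bf C (u + v) (u + v) = Bf C u u + 2 * Bf C u v + Bf C v v := by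
  rw [Bf_add_left, Bf_add_right, Bf_add_right, Bf_comm C v u]
  ring

/-- Cauchy–Schwarz-ish polarization bound for the positive form. -/
private lemma Bf_abs_le (C : H →L[ℂ] H) (hacc : ∀ x : H, 0 ≤ (⟪C x, x⟫_ℂ).re) (u v : H) :
    |Bf C u v| ≤ (Bf C u u + Bf C v v) / 2 := by
  have hp : 0 ≤ Bf C (u + v) (u + v) := by rw [Bf_self]; exact hacc _
  have hm : 0 ≤ Bf C (u - v) (u - v) := by rw [Bf_self]; exact hacc _
  have hpe := Bf_expand C u v
  have hsub : u - v = u + (-1 : ℝ) • v := by simp [sub_eq_add_neg]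
  have hme : Bf C (u - v) (u - v) = Bf C u u - 2 * Bf C u v + Bf C v v := by
    rw [hsub, Bf_expand]
    simp only [Bf_smul_left, Bf_smul_right]
    ring
  rw [abs_le]
  constructor <;> nlinarith [hp, hm]

private lemma aux_u_deriv (C : H →L[ℂ] H) (x : H) (s : ℝ) :
    HasDerivAt (fun r : ℝ => NormedSpace.exp (r • (-C)) x)
      ((-C) (NormedSpace.exp (s • (-C)) x)) s := by
  have h := hasDerivAt_exp_smul_const' (𝕂 := ℝ) (-C) s
  have h2 := ((ContinuousLinearMap.apply ℂ H x).restrictScalars ℝ).hasFDerivAt.comp_hasDerivAt s h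
  simpa [Function.comp_def, ContinuousLinearMap.mul_apply] using h2

private lemma aux_g_deriv (C : H →L[ℂ] H) (s : ℝ)
    (u : ℝ → H) (hu : HasDerivAt u ((-C) (u s)) s) :
    HasDerivAt (fun r => (⟪u r, u r⟫_ℂ).re) (-(2 * (⟪C (u s), u s⟫_ℂ).re)) s := by
  have h1 : HasDerivAt (fun r => ⟪u r, u r⟫_ℂ)
      (⟪u s, (-C) (u s)⟫_ℂ + ⟪(-C) (u s), u s⟫_ℂ) s := hu.inner ℂ hu
  have h2 := Complex.reCLM.hasFDerivAt.comp_hasDerivAt s h1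
  convert h2 using 1
  rotate_left 3
  have hconj : ⟪u s, C (u s)⟫_ℂ = (starRingEnd ℂ) ⟪C (u s), u s⟫_ℂ := (inner_conj_symm _ _).symm
  simp only [Function.comp, ContinuousLinearMap.neg_apply, inner_neg_left, inner_neg_right,
    Complex.reCLM_apply, Complex.add_re, Complex.neg_re, hconj, Complex.conj_re]
  ring
  all_goals rfl

private lemma aux_exp_tsum (A : H →L[ℂ] H) (x : H) (s : ℝ) :
    NormedSpace.exp (s • A) x = ∑' n : ℕ, (s ^ n / n.factorial) • (A ^ n) x := by
  have hsum : Summable fun n : ℕ => ((n.factorial : ℝ)⁻¹) • (s • A) ^ n :=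
    NormedSpace.expSeries_summable' (𝕂 := ℝ) (s • A)
  have hmap := (hsum.hasSum.mapL ((ContinuousLinearMap.apply ℂ H x).restrictScalars ℝ)).tsum_eq
  rw [NormedSpace.exp_eq_tsum ℝ]
  refine Eq.trans ?_ (Eq.trans hmap.symm ?_)
  · rfl
  · congr 1; ext n
    simp [smul_pow, smul_smul, div_eq_inv_mul]


private lemma aux_pointwise (C : H →L[ℂ] H) (hacc : ∀ x : H, 0 ≤ (⟪C x, x⟫_ℂ).re)
    (x : H) (m : ℕ) (t₀ s : ℝ) (hs : 0 ≤ s) (hst : s ≤ t₀) :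
    (⟪C (NormedSpace.exp (s • (-C)) x), NormedSpace.exp (s • (-C)) x⟫_ℂ).re
      ≤ 2 * (m + 1) * Real.exp t₀ ^ 2
          * (∑ j ∈ Finset.range (m + 1), (⟪C ((C ^ j) x), (C ^ j) x⟫_ℂ).re)
        + 2 * ‖C‖ *
          ((∑' i : ℕ, (t₀ * ‖C‖) ^ (i + (m + 1)) / (i + (m + 1)).factorial) * ‖x‖) ^ 2 := by
  have ht₀ : 0 ≤ t₀ := hs.trans hst
  set q : ℕ → ℝ := fun j => (⟪C ((C ^ j) x), (C ^ j) x⟫_ℂ).re with hqdef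
  set Q : ℝ := ∑ j ∈ Finset.range (m + 1), q j with hQdef
  set E : ℝ := ∑' i : ℕ, (t₀ * ‖C‖) ^ (i + (m + 1)) / (i + (m + 1)).factorial with hEdef
  set v : ℕ → H := fun n => (s ^ n / n.factorial) • ((-C) ^ n) x with hvdef
  have hut : NormedSpace.exp (s • (-C)) x = ∑' n, v n := aux_exp_tsum (-C) x s
  have hAn : ∀ n, ‖((-C) ^ n) x‖ ≤ ‖C‖ ^ n * ‖x‖ := by
    intro n
    induction n with
    | zero => simp
    | succ n ih =>
      rw [pow_succ', ContinuousLinearMap.mul_apply]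
      calc ‖(-C) (((-C) ^ n) x)‖ ≤ ‖-C‖ * ‖((-C) ^ n) x‖ := le_opNorm _ _
        _ ≤ ‖C‖ * (‖C‖ ^ n * ‖x‖) := by
            rw [norm_neg]
            exact mul_le_mul_of_nonneg_left ih (norm_nonneg C)
        _ = ‖C‖ ^ (n + 1) * ‖x‖ := by ring
  have hvle : ∀ n, ‖v n‖ ≤ (t₀ * ‖C‖) ^ n / n.factorial * ‖x‖ := by
    intro n
    rw [hvdef]
    simp only []
    rw [norm_smul, Real.norm_eq_abs, abs_of_nonneg (by positivity : (0:ℝ) ≤ s ^ n / n.factorial)]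
    calc s ^ n / n.factorial * ‖((-C) ^ n) x‖
        ≤ s ^ n / n.factorial * (‖C‖ ^ n * ‖x‖) :=
          mul_le_mul_of_nonneg_left (hAn n) (by positivity)
      _ = s ^ n * ‖C‖ ^ n * ‖x‖ / n.factorial := by ring
      _ ≤ t₀ ^ n * ‖C‖ ^ n * ‖x‖ / n.factorial := by
          have h2 : s ^ n ≤ t₀ ^ n := pow_le_pow_left₀ hs hst n
          gcongr
      _ = (t₀ * ‖C‖) ^ n / n.factorial * ‖x‖ := by rw [mul_pow]; ring
  have hsumr : Summable (fun n : ℕ => (t₀ * ‖C‖) ^ n / n.factorial * ‖x‖) :=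
    (Real.summable_pow_div_factorial (t₀ * ‖C‖)).mul_right ‖x‖
  have hnorm_sum : Summable (fun n => ‖v n‖) :=
    Summable.of_nonneg_of_le (fun n => norm_nonneg _) hvle hsumr
  have hv_sum : Summable v := hnorm_sum.of_norm
  set p : H := ∑ j ∈ Finset.range (m + 1), v j with hpdef
  set w : H := ∑' i : ℕ, v (i + (m + 1)) with hwdef
  have hsplit : NormedSpace.exp (s • (-C)) x = p + w := by
    rw [hut, ← Summable.sum_add_tsum_nat_add (m + 1) hv_sum]
  have htail_sum : Summable (fun i : ℕ => ‖v (i + (m + 1))‖) :=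
    (summable_nat_add_iff (m + 1)).2 hnorm_sum
  have hw : ‖w‖ ≤ E * ‖x‖ := by
    calc ‖w‖ ≤ ∑' i, ‖v (i + (m + 1))‖ := norm_tsum_le_tsum_norm htail_sum
      _ ≤ ∑' i : ℕ, ((t₀ * ‖C‖) ^ (i + (m + 1)) / (i + (m + 1)).factorial * ‖x‖) :=
          Summable.tsum_le_tsum (fun i => hvle _) htail_sum ((summable_nat_add_iff (m + 1)).2 hsumr)
      _ = E * ‖x‖ := tsum_mul_right
  have hq_nonneg : ∀ j, 0 ≤ q j := fun j => hacc _
  have hQ_nonneg : 0 ≤ Q := Finset.sum_nonneg fun j _ => hq_nonneg j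
  -- diagonal bound
  have hd : ∀ j, Bf C (v j) (v j) ≤ Real.exp t₀ ^ 2 * q j := by
    intro j
    have hc_nonneg : (0:ℝ) ≤ s ^ j / j.factorial := by positivity
    have hc_le : s ^ j / j.factorial ≤ Real.exp t₀ := by
      have h1 : s ^ j / j.factorial ≤ Real.exp s := by
        rw [Real.exp_eq_exp_ℝ, NormedSpace.exp_eq_tsum_div]
        exact Summable.le_tsum (Real.summable_pow_div_factorial s) j
          (fun i _ => by positivity)
      exact h1.trans (Real.exp_le_exp.2 hst)
    have hyy : Bf C (((-C) ^ j) x) (((-C) ^ j) x) = q j := by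
      have hneg : (-C) ^ j = ((-1 : ℝ) ^ j) • C ^ j := by
        rw [← neg_one_smul ℝ C, smul_pow]
      rw [hneg, ContinuousLinearMap.smul_apply, Bf_smul_left, Bf_smul_right, ← mul_assoc]
      have : ((-1 : ℝ) ^ j) * ((-1 : ℝ) ^ j) = 1 := by
        rw [← pow_add]
        simp [pow_add, neg_one_pow_eq_one_iff_even, ← two_mul, pow_mul]
      rw [this, one_mul, Bf_self]
    have hvj : Bf C (v j) (v j) = (s ^ j / j.factorial) ^ 2 * q j := by
      rw [hvdef]
      simp only []
      rw [Bf_smul_left, Bf_smul_right, hyy]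
      ring
    rw [hvj]
    have := pow_le_pow_left₀ hc_nonneg hc_le 2
    exact mul_le_mul_of_nonneg_right this (hq_nonneg j)
  have hBpp : Bf C p p ≤ (m + 1) * (Real.exp t₀ ^ 2 * Q) := by
    have hexp : Bf C p p = ∑ j ∈ Finset.range (m + 1), ∑ k ∈ Finset.range (m + 1),
        Bf C (v j) (v k) := by
      rw [hpdef, Bf_sum_left]
      exact Finset.sum_congr rfl fun j _ => Bf_sum_right ..
    have hle : Bf C p p ≤ ∑ j ∈ Finset.range (m + 1), ∑ k ∈ Finset.range (m + 1),
        (Bf C (v j) (v j) + Bf C (v k) (v k)) / 2 := by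
      rw [hexp]
      refine Finset.sum_le_sum fun j _ => Finset.sum_le_sum fun k _ => ?_
      exact le_trans (le_abs_self _) (Bf_abs_le C hacc _ _)
    have hinner : ∀ j, ∑ k ∈ Finset.range (m + 1),
        (Bf C (v j) (v j) + Bf C (v k) (v k)) / 2
        = ((m + 1 : ℕ) : ℝ) * (Bf C (v j) (v j) / 2)
          + (∑ k ∈ Finset.range (m + 1), Bf C (v k) (v k)) / 2 := by
      intro j
      rw [← Finset.sum_div, Finset.sum_add_distrib, Finset.sum_const, Finset.card_range,
        nsmul_eq_mul, add_div]
      ring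
    have heq : ∑ j ∈ Finset.range (m + 1), ∑ k ∈ Finset.range (m + 1),
        (Bf C (v j) (v j) + Bf C (v k) (v k)) / 2
        = (m + 1) * ∑ j ∈ Finset.range (m + 1), Bf C (v j) (v j) := by
      rw [Finset.sum_congr rfl fun j _ => hinner j, Finset.sum_add_distrib, Finset.sum_const,
        Finset.card_range, nsmul_eq_mul, ← Finset.mul_sum, ← Finset.sum_div]
      push_cast
      ring
    have hsum_le : ∑ j ∈ Finset.range (m + 1), Bf C (v j) (v j)
        ≤ Real.exp t₀ ^ 2 * Q := by
      rw [hQdef, Finset.mul_sum]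
      exact Finset.sum_le_sum fun j _ => hd j
    calc Bf C p p ≤ (m + 1) * ∑ j ∈ Finset.range (m + 1), Bf C (v j) (v j) := by
          rw [← heq]; exact hle
      _ ≤ (m + 1) * (Real.exp t₀ ^ 2 * Q) := by
          apply mul_le_mul_of_nonneg_left hsum_le (by positivity)
  have hww : Bf C w w ≤ ‖C‖ * (E * ‖x‖) ^ 2 := by
    have hE_nonneg : 0 ≤ E := by
      rw [hEdef]; exact tsum_nonneg fun i => by positivity
    have h1 : Bf C w w = (⟪C w, w⟫_ℂ).re := Bf_self ..
    have h2 : (⟪C w, w⟫_ℂ).re ≤ ‖⟪C w, w⟫_ℂ‖ := Complex.re_le_norm _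
    have h3 : ‖⟪C w, w⟫_ℂ‖ ≤ ‖C w‖ * ‖w‖ := norm_inner_le_norm _ _
    have h4 : ‖C w‖ ≤ ‖C‖ * ‖w‖ := le_opNorm _ _
    have h5 : 0 ≤ ‖w‖ := norm_nonneg _
    have h8 : ‖w‖ * ‖w‖ ≤ (E * ‖x‖) * (E * ‖x‖) := mul_le_mul hw hw h5 (h5.trans hw)
    calc Bf C w w = (⟪C w, w⟫_ℂ).re := h1
      _ ≤ ‖C w‖ * ‖w‖ := h2.trans h3
      _ ≤ (‖C‖ * ‖w‖) * ‖w‖ := mul_le_mul_of_nonneg_right h4 h5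
      _ = ‖C‖ * (‖w‖ * ‖w‖) := by ring
      _ ≤ ‖C‖ * ((E * ‖x‖) * (E * ‖x‖)) := mul_le_mul_of_nonneg_left h8 (norm_nonneg C)
      _ = ‖C‖ * (E * ‖x‖) ^ 2 := by ring
  -- combine
  have hmain : (⟪C (NormedSpace.exp (s • (-C)) x), NormedSpace.exp (s • (-C)) x⟫_ℂ).re
      = Bf C (p + w) (p + w) := by
    rw [hsplit, Bf_self]
  rw [hmain, Bf_expand]
  have habs := (abs_le.1 (Bf_abs_le C hacc p w)).2
  have hBpp_nonneg : 0 ≤ Bf C p p := by rw [Bf_self]; exact hacc _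
  have hBww_nonneg : 0 ≤ Bf C w w := by rw [Bf_self]; exact hacc _
  nlinarith [hBpp, hww, habs]

end Aux

/-- if `C` is accretive and `‖e^{-C t₀}‖ < 1` for some `t₀ > 0`, then `C` has a
finite hypocoercivity index: `∑_{j=0}^m (C*)^j C_H C^j ≥ κ I` for some `m` and `κ > 0`. -/
theorem finite_hypocoercivity_index_of_contractive
    {H : Type*} [NormedAddCommGroup H] [InnerProductSpace ℂ H]
    [CompleteSpace H] [TopologicalSpace.SeparableSpace H]
    (C : H →L[ℂ] H)
    (hacc : ∀ x : H, 0 ≤ (⟪C x, x⟫_ℂ).re)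
    (t₀ : ℝ) (ht₀ : 0 < t₀)
    (hP : ‖NormedSpace.exp (-((t₀ : ℂ) • C))‖ < 1) :
    ∃ (m : ℕ) (κ : ℝ), 0 < κ ∧ ∀ x : H,
      κ * ‖x‖ ^ 2 ≤ (⟪(∑ j ∈ Finset.range (m + 1),
        (ContinuousLinearMap.adjoint C) ^ j *
          (((1 : ℂ) / 2) • (C + ContinuousLinearMap.adjoint C)) * C ^ j) x, x⟫_ℂ).re := by
  classical
  set P := NormedSpace.exp (-((t₀ : ℂ) • C)) with hPdef
  set δ : ℝ := (1 - ‖P‖ ^ 2) / 2 with hδdef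
  have hPn : 0 ≤ ‖P‖ := norm_nonneg _
  have hδ : 0 < δ := by
    have : ‖P‖ ^ 2 < 1 := by nlinarith
    simp only [hδdef]; linarith
  set r : ℝ := t₀ * ‖C‖ with hrdef
  have hr : 0 ≤ r := mul_nonneg ht₀.le (norm_nonneg _)
  have hsummr : Summable (fun n : ℕ => r ^ n / n.factorial) :=
    Real.summable_pow_div_factorial r
  set E : ℕ → ℝ := fun m => ∑' i : ℕ, r ^ (i + (m + 1)) / (i + (m + 1)).factorial with hEdef
  have hE_nonneg : ∀ m, 0 ≤ E m := by
    intro m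
    apply tsum_nonneg
    intro i
    positivity
  have hkey : ∀ m, E m = (∑' n : ℕ, r ^ n / n.factorial)
      - ∑ j ∈ Finset.range (m + 1), r ^ j / j.factorial := by
    intro m
    have h := Summable.sum_add_tsum_nat_add (f := fun n : ℕ => r ^ n / n.factorial) (m + 1) hsummr
    simp only [hEdef]
    push_cast at h ⊢
    linarith
  have hE_tendsto : Filter.Tendsto E Filter.atTop (nhds 0) := by
    have hpart := hsummr.hasSum.tendsto_sum_nat.comp (Filter.tendsto_add_atTop_nat 1)
    have h2 := Filter.Tendsto.sub
      (tendsto_const_nhds (x := (∑' n : ℕ, r ^ n / n.factorial)) (f := Filter.atTop)) hpart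
    rw [sub_self] at h2
    refine h2.congr fun m => ?_
    simp only [Function.comp]
    rw [hkey m]
  have hm : ∃ m : ℕ, 2 * ‖C‖ * E m ^ 2 * t₀ ≤ δ / 2 := by
    have hgt : Filter.Tendsto (fun m => 2 * ‖C‖ * E m ^ 2 * t₀) Filter.atTop (nhds 0) := by
      have := ((hE_tendsto.pow 2).const_mul (2 * ‖C‖)).mul_const t₀
      simpa using this
    exact (hgt.eventually_le_const (by positivity : (0:ℝ) < δ / 2)).exists
  obtain ⟨m, hmE⟩ := hm
  refine ⟨m, δ / 2 / (2 * (m + 1) * Real.exp t₀ ^ 2 * t₀), by positivity, ?_⟩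
  intro x
  -- the quantity Q
  set q : ℕ → ℝ := fun j => (⟪C ((C ^ j) x), (C ^ j) x⟫_ℂ).re with hqdef
  set Q : ℝ := ∑ j ∈ Finset.range (m + 1), q j with hQdef
  have hq_nonneg : ∀ j, 0 ≤ q j := fun j => hacc _
  have hQ_nonneg : 0 ≤ Q := Finset.sum_nonneg fun j _ => hq_nonneg j
  -- identify the goal quantity with Q
  have hgoal_eq : (⟪(∑ j ∈ Finset.range (m + 1),
        (ContinuousLinearMap.adjoint C) ^ j *
          (((1 : ℂ) / 2) • (C + ContinuousLinearMap.adjoint C)) * C ^ j) x, x⟫_ℂ).re = Q := by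
    rw [hQdef, ContinuousLinearMap.sum_apply, sum_inner, Complex.re_sum]
    refine Finset.sum_congr rfl fun j _ => ?_
    have hadj : (ContinuousLinearMap.adjoint C) ^ j = ContinuousLinearMap.adjoint (C ^ j) := by
      rw [← star_eq_adjoint, ← star_eq_adjoint, ← star_pow]
    rw [ContinuousLinearMap.mul_apply, ContinuousLinearMap.mul_apply, hadj,
      ContinuousLinearMap.adjoint_inner_left]
    set y := (C ^ j) x
    rw [ContinuousLinearMap.smul_apply, ContinuousLinearMap.add_apply, inner_smul_left,
      inner_add_left, ContinuousLinearMap.adjoint_inner_left, ← inner_conj_symm y (C y),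
      Complex.add_conj]
    simp [hqdef, y]
  rw [hgoal_eq]
  -- the flow
  set u : ℝ → H := fun s => NormedSpace.exp (s • (-C)) x with hudef
  have hu : ∀ s, HasDerivAt u ((-C) (u s)) s := fun s => aux_u_deriv C x s
  have hucont : Continuous u := by
    rw [continuous_iff_continuousAt]
    exact fun s => (hu s).continuousAt
  set f : ℝ → ℝ := fun s => (⟪C (u s), u s⟫_ℂ).re with hfdef
  have hfcont : Continuous f := by
    apply Complex.continuous_re.comp
    exact Continuous.inner (C.continuous.comp hucont) hucont
  -- FTC lower bound
  have hg : ∀ s : ℝ, HasDerivAt (fun r => (⟪u r, u r⟫_ℂ).re) (-(2 * f s)) s :=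
    fun s => aux_g_deriv C s u (hu s)
  have hlow : δ * ‖x‖ ^ 2 ≤ ∫ s in (0 : ℝ)..t₀, f s := by
    have hint : IntervalIntegrable (fun s => -(2 * f s)) MeasureTheory.volume 0 t₀ :=
      ((continuous_const.mul hfcont).neg).intervalIntegrable _ _
    have hFTC := intervalIntegral.integral_eq_sub_of_hasDerivAt (fun s _ => hg s) hint
    rw [intervalIntegral.integral_neg, intervalIntegral.integral_const_mul] at hFTC
    have hu0 : u 0 = x := by
      rw [hudef]; simp [NormedSpace.exp_zero]
    have hut : u t₀ = P x := by
      rw [hudef, hPdef]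
      have hPP : NormedSpace.exp (t₀ • (-C)) = NormedSpace.exp (-((t₀ : ℂ) • C)) := by
        congr 1
        rw [smul_neg, ← neg_smul, Complex.coe_smul, neg_smul]
      simp only [hPP]
    have h0 : (⟪u 0, u 0⟫_ℂ).re = ‖x‖ ^ 2 := by
      rw [hu0, ← RCLike.re_to_complex, inner_self_eq_norm_sq]
    have ht : (⟪u t₀, u t₀⟫_ℂ).re ≤ (‖P‖ * ‖x‖) ^ 2 := by
      rw [hut, ← RCLike.re_to_complex, inner_self_eq_norm_sq]
      have := P.le_opNorm x
      nlinarith [norm_nonneg (P x), norm_nonneg x, norm_nonneg P]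
    rw [h0] at hFTC
    simp only [hδdef]
    nlinarith [hFTC, ht, norm_nonneg x, norm_nonneg P]
  -- pointwise upper bound
  have hpt : ∀ s ∈ Set.Icc (0 : ℝ) t₀,
      f s ≤ 2 * (m + 1) * Real.exp t₀ ^ 2 * Q + 2 * ‖C‖ * (E m * ‖x‖) ^ 2 := by
    intro s hs
    have := aux_pointwise C hacc x m t₀ s hs.1 hs.2
    simp only [hfdef, hudef, hqdef, hQdef, hEdef, hrdef] at this ⊢
    convert this using 4 <;> rw [hrdef]
  have hup : (∫ s in (0 : ℝ)..t₀, f s)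
      ≤ t₀ * (2 * (m + 1) * Real.exp t₀ ^ 2 * Q + 2 * ‖C‖ * (E m * ‖x‖) ^ 2) := by
    have h1 : (∫ s in (0 : ℝ)..t₀, f s) ≤
        ∫ _ in (0 : ℝ)..t₀, (2 * (m + 1) * Real.exp t₀ ^ 2 * Q + 2 * ‖C‖ * (E m * ‖x‖) ^ 2) := by
      apply intervalIntegral.integral_mono_on ht₀.le
        (hfcont.intervalIntegrable _ _) (intervalIntegrable_const) hpt
    rw [intervalIntegral.integral_const, sub_zero, smul_eq_mul] at h1
    exact h1
  -- combine
  have hcomb : δ * ‖x‖ ^ 2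
      ≤ t₀ * (2 * (m + 1) * Real.exp t₀ ^ 2 * Q) + (δ / 2) * ‖x‖ ^ 2 := by
    have h2 : t₀ * (2 * ‖C‖ * (E m * ‖x‖) ^ 2) ≤ (δ / 2) * ‖x‖ ^ 2 := by
      have := mul_le_mul_of_nonneg_right hmE (sq_nonneg ‖x‖)
      calc t₀ * (2 * ‖C‖ * (E m * ‖x‖) ^ 2) = (2 * ‖C‖ * E m ^ 2 * t₀) * ‖x‖ ^ 2 := by ring
        _ ≤ (δ / 2) * ‖x‖ ^ 2 := this
    nlinarith [hlow, hup]
  have hfinal : (δ / 2) * ‖x‖ ^ 2 ≤ (2 * (m + 1) * Real.exp t₀ ^ 2 * t₀) * Q := by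
    nlinarith [hcomb]
  rw [div_mul_eq_mul_div, div_le_iff₀ (by positivity)]
  calc δ / 2 * ‖x‖ ^ 2 ≤ (2 * (m + 1) * Real.exp t₀ ^ 2 * t₀) * Q := hfinal
    _ = Q * (2 * (m + 1) * Real.exp t₀ ^ 2 * t₀) := by ring
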